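/- Let T ∈ G be elliptic and let λ be an eigenvalue of T such that M = ker(T − λ·I) contains a time-like vector. Then H ⊕ ℂ = M ⊕ M^† (internal direct sum), A is positive definite on M^† and M^† is complete for the induced norm, T maps M^† bijectively onto itself, and for every S ∈ G one has S ∘ T = T ∘ S if and only if S(M) = M, S(M^†) = M^†, and S ∘ T = T ∘ S on M^†. Consequently the map S ↦ (S|_M, S|_{M^†}) is a group isomorphism from the centralizer {S ∈ G : ST = TS} onto G_M × Z(T|_{M^†}), where G_M is the group of bounded bijective linear self-maps of M preserving A|_M, and Z(T|_{M^†}) consists of unitary operators of the Hilbert space (M^†, A) commuting with T|_{M^†}. -/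

import Mathlib

noncomputable section

variable {H : Type*} [NormedAddCommGroup H] [InnerProductSpace ℂ H] [CompleteSpace H]

/-- The Hermitian form `A((x,z),(y,w)) = ⟨x,y⟩ - z·conj w` on `H ⊕ ℂ`, linear in the
first argument (the paper's convention); `⟨x,y⟩` (linear in `x`) is `inner y x` in Mathlib. -/
def formA (u v : H × ℂ) : ℂ :=
  (inner ℂ v.1 u.1 : ℂ) - u.2 * (starRingEnd ℂ) v.2

/-- The standard inner product of the Hilbert space `H ⊕ ℂ`, linear in the first argument. -/
def ipStd (u v : H × ℂ) : ℂ :=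
  (inner ℂ v.1 u.1 : ℂ) + u.2 * (starRingEnd ℂ) v.2

/-- Membership in the group `G` of bounded bijective linear maps preserving `A`. -/
def memG (T : (H × ℂ) →L[ℂ] (H × ℂ)) : Prop :=
  Function.Bijective T ∧ ∀ u v : H × ℂ, formA (T u) (T v) = formA u v

/-- `T` is elliptic: it has an eigenvector `(x,1)` with `‖x‖ < 1`. -/
def IsEllipticG (T : (H × ℂ) →L[ℂ] (H × ℂ)) : Prop :=
  ∃ x : H, ‖x‖ < 1 ∧ ∃ μ : ℂ, T (x, 1) = μ • ((x, 1) : H × ℂ)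

/-- Points `x` of the closed unit ball with `(x,1)` an eigenvector of `T`. -/
def fixedBall (T : (H × ℂ) →L[ℂ] (H × ℂ)) : Set H :=
  {x : H | ‖x‖ ≤ 1 ∧ ∃ μ : ℂ, T (x, 1) = μ • ((x, 1) : H × ℂ)}

/-- `T` is hyperbolic: not elliptic, with exactly two fixed points in the closed ball. -/
def IsHyperbolicG (T : (H × ℂ) →L[ℂ] (H × ℂ)) : Prop :=
  ¬ IsEllipticG T ∧ ∃ x y : H, x ≠ y ∧ fixedBall T = {x, y}

/-- `T` is parabolic: not elliptic, with exactly one fixed point in the closed ball. -/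
def IsParabolicG (T : (H × ℂ) →L[ℂ] (H × ℂ)) : Prop :=
  ¬ IsEllipticG T ∧ ∃ x : H, fixedBall T = {x}

/-- `M†`, the `A`-orthogonal complement of a subspace `M` of `H ⊕ ℂ`. -/
def daggerA (M : Submodule ℂ (H × ℂ)) : Submodule ℂ (H × ℂ) where
  carrier := {v | ∀ m ∈ M, formA v m = 0}
  add_mem' := by
    intro a b ha hb m hm
    have h1 := ha m hm
    have h2 := hb m hm
    simp only [formA, Prod.fst_add, Prod.snd_add, inner_add_right, add_mul] at *
    linear_combination h1 + h2
  zero_mem' := by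
    intro m hm
    simp [formA]
  smul_mem' := by
    intro c a ha m hm
    have h1 := ha m hm
    simp only [formA, Prod.smul_fst, Prod.smul_snd, inner_smul_right, smul_eq_mul] at *
    linear_combination c * h1

/-- The norm induced by `A` on a subspace where `A` is positive. -/
def nA (v : H × ℂ) : ℝ := Real.sqrt (formA v v).re

/-- Sequential completeness of a subspace for the norm induced by `A`. -/
def CompleteForA (M : Submodule ℂ (H × ℂ)) : Prop :=
  ∀ f : ℕ → H × ℂ, (∀ n, f n ∈ M) →
    (∀ ε : ℝ, 0 < ε → ∃ N : ℕ, ∀ m n : ℕ, N ≤ m → N ≤ n → nA (f m - f n) < ε) →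
    ∃ v ∈ M, ∀ ε : ℝ, 0 < ε → ∃ N : ℕ, ∀ n : ℕ, N ≤ n → nA (f n - v) < ε

end

section
variable {H : Type*} [NormedAddCommGroup H] [InnerProductSpace ℂ H] [CompleteSpace H]

open scoped ComplexConjugate

namespace CentAux
set_option linter.unusedSectionVars false
variable {H : Type*} [NormedAddCommGroup H] [InnerProductSpace ℂ H] [CompleteSpace H]

lemma formA_add_left (u u' v : H × ℂ) : formA (u + u') v = formA u v + formA u' v := by
  simp [formA, inner_add_right, add_mul]; ring

lemma formA_add_right (u v v' : H × ℂ) : formA u (v + v') = formA u v + formA u v' := by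
  simp [formA, inner_add_left, mul_add]; ring

lemma formA_smul_left (c : ℂ) (u v : H × ℂ) : formA (c • u) v = c * formA u v := by
  simp [formA, inner_smul_right]; ring

lemma formA_smul_right (c : ℂ) (u v : H × ℂ) : formA u (c • v) = conj c * formA u v := by
  simp [formA, inner_smul_left]; ring

lemma formA_conj (u v : H × ℂ) : formA u v = conj (formA v u) := by
  simp only [formA, map_sub, map_mul, Complex.conj_conj, inner_conj_symm]
  ring

lemma formA_sub_left (u u' v : H × ℂ) : formA (u - u') v = formA u v - formA u' v := by
  simp [formA, inner_sub_right, sub_mul]; ring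

lemma formA_sub_right (u v v' : H × ℂ) : formA u (v - v') = formA u v - formA u v' := by
  simp [formA, inner_sub_left, mul_sub]; ring

lemma formA_self (w : H × ℂ) : formA w w = ((‖w.1‖ ^ 2 - ‖w.2‖ ^ 2 : ℝ) : ℂ) := by
  simp [formA, inner_self_eq_norm_sq_to_K, Complex.mul_conj']

lemma continuous_formA_left (m : H × ℂ) : Continuous fun v : H × ℂ => formA v m := by
  exact (Continuous.inner continuous_const continuous_fst).sub
    (continuous_snd.mul continuous_const)

end CentAux
namespace CentAux
set_option linter.unusedSectionVars false
variable {H : Type*} [NormedAddCommGroup H] [InnerProductSpace ℂ H] [CompleteSpace H]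

/-- `j y = (y, ⟪x,y⟫)`. -/
noncomputable def jmap (x : H) : H →L[ℂ] H × ℂ := (ContinuousLinearMap.id ℂ H).prod (innerSL ℂ x)

@[simp] lemma jmap_apply (x y : H) : jmap x y = (y, (inner ℂ x y : ℂ)) := rfl

noncomputable def Bop (x : H) : H →L[ℂ] H := ContinuousLinearMap.id ℂ H - (innerSL ℂ x).smulRight x

lemma Bop_apply (x y : H) : Bop x y = y - (inner ℂ x y : ℂ) • x := rfl

lemma formA_e (x : H) (w : H × ℂ) : formA w ((x, 1) : H × ℂ) = (inner ℂ x w.1 : ℂ) - w.2 := by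
  simp [formA]

lemma formA_e_zero_iff (x : H) (w : H × ℂ) :
    formA w ((x, 1) : H × ℂ) = 0 ↔ w.2 = (inner ℂ x w.1 : ℂ) := by
  rw [formA_e, sub_eq_zero, eq_comm]

lemma formA_jpair (x : H) (u w : H × ℂ) (hu : u.2 = (inner ℂ x u.1 : ℂ))
    (hw : w.2 = (inner ℂ x w.1 : ℂ)) :
    formA u w = (inner ℂ w.1 (Bop x u.1) : ℂ) := by
  rw [formA, Bop_apply, inner_sub_right, inner_smul_right, hu, hw,
    ← inner_conj_symm w.1 x]

lemma re_inner_Bop (x y : H) :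
    (inner ℂ y (Bop x y) : ℂ).re = ‖y‖ ^ 2 - ‖(inner ℂ x y : ℂ)‖ ^ 2 := by
  have h : (inner ℂ y (Bop x y) : ℂ)
      = (inner ℂ y y : ℂ) - (inner ℂ x y : ℂ) * (starRingEnd ℂ) (inner ℂ x y : ℂ) := by
    rw [Bop_apply, inner_sub_right, inner_smul_right, ← inner_conj_symm y x]
  rw [h, Complex.sub_re, Complex.mul_conj]
  have h2 : (Complex.normSq (inner ℂ x y : ℂ) : ℂ).re = ‖(inner ℂ x y : ℂ)‖ ^ 2 := by
    rw [Complex.ofReal_re, Complex.normSq_eq_norm_sq]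
  rw [h2]
  congr 1
  exact inner_self_eq_norm_sq (𝕜 := ℂ) y

lemma pos_on_N {x : H} (hx : ‖x‖ < 1) (w : H × ℂ) (hw : w.2 = (inner ℂ x w.1 : ℂ)) :
    (1 - ‖x‖ ^ 2) * ‖w.1‖ ^ 2 ≤ (formA w w).re := by
  rw [formA_self]
  have h1 : ‖w.2‖ ≤ ‖x‖ * ‖w.1‖ := by rw [hw]; exact norm_inner_le_norm x w.1
  have h2 : (0:ℝ) ≤ ‖w.2‖ := norm_nonneg _
  have h3 : (0:ℝ) ≤ ‖x‖ := norm_nonneg _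
  have h4 : (0:ℝ) ≤ ‖w.1‖ := norm_nonneg _
  simp only [Complex.ofReal_re]
  nlinarith

lemma pos_def_N {x : H} (hx : ‖x‖ < 1) {w : H × ℂ} (hw : w.2 = (inner ℂ x w.1 : ℂ))
    (hwne : w ≠ 0) : 0 < (formA w w).re := by
  have h1 : w.1 ≠ 0 := by
    intro h
    apply hwne
    have : w.2 = 0 := by rw [hw, h]; simp
    exact Prod.ext h this
  have h2 : (0:ℝ) < ‖w.1‖ := norm_pos_iff.2 h1
  have h3 : (0:ℝ) < 1 - ‖x‖ ^ 2 := by nlinarith [norm_nonneg x]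
  have := pos_on_N hx w hw
  have h4 := mul_pos h3 (pow_pos h2 2)
  linarith

lemma dagger_snd {x : H} {M : Submodule ℂ (H × ℂ)} (hxM : ((x, 1) : H × ℂ) ∈ M)
    {w : H × ℂ} (hw : w ∈ daggerA M) : w.2 = (inner ℂ x w.1 : ℂ) :=
  (formA_e_zero_iff x w).1 (hw _ hxM)

lemma exists_decomp {x : H} (hx : ‖x‖ < 1) {M : Submodule ℂ (H × ℂ)}
    (hMc : IsClosed (M : Set (H × ℂ))) (hxM : ((x, (1:ℂ)) : H × ℂ) ∈ M) (u : H × ℂ) :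
    ∃ m ∈ M, u - m ∈ daggerA M := by
  classical
  set δ : ℝ := 1 - ‖x‖ ^ 2 with hδdef
  have hδ : 0 < δ := by have := norm_nonneg x; nlinarith
  set e : H × ℂ := ((x, 1) : H × ℂ) with he
  have hee : formA e e = ((‖x‖ ^ 2 - 1 : ℝ) : ℂ) := by
    rw [formA_self]; norm_num [he]
  have heene : formA e e ≠ 0 := by
    rw [hee]
    simp only [ne_eq, Complex.ofReal_eq_zero]
    intro h; nlinarith
  -- subspace F
  set F : Submodule ℂ H := Submodule.comap ((jmap x : H →L[ℂ] H × ℂ) : H →ₗ[ℂ] H × ℂ) M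
    with hFdef
  have hFmem : ∀ y : H, y ∈ F ↔ jmap x y ∈ M := fun y => Iff.rfl
  have hFc : IsClosed (F : Set H) := hMc.preimage (jmap x).continuous
  haveI : CompleteSpace F := hFc.completeSpace_coe
  set Sop : F →L[ℂ] F := (F.orthogonalProjectionOnto) ∘L ((Bop x) ∘L F.subtypeL) with hSdef
  have hSapp : ∀ f : F, Sop f = F.orthogonalProjectionOnto (Bop x (f : H)) := fun f => rfl
  have hSinner : ∀ f g : F, (inner ℂ g (Sop f) : ℂ) = (inner ℂ (g : H) (Bop x (f : H)) : ℂ) := by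
    intro f g
    rw [hSapp f]
    exact Submodule.inner_orthogonalProjectionOnto_eq_of_mem_left (K := F) g ((Bop x) (f : H))
  have hlow : ∀ f : F, δ * ‖f‖ ^ 2 ≤ (inner ℂ (f : H) (Bop x (f : H)) : ℂ).re := by
    intro f
    rw [re_inner_Bop]
    have h1 : ‖(inner ℂ x (f : H) : ℂ)‖ ≤ ‖x‖ * ‖(f : H)‖ := norm_inner_le_norm _ _
    have h1' : ‖(inner ℂ x (f : H) : ℂ)‖ ^ 2 ≤ ‖x‖ ^ 2 * ‖(f : H)‖ ^ 2 := by
      have := norm_nonneg (inner ℂ x (f : H) : ℂ)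
      have := norm_nonneg x
      have := norm_nonneg (f : H)
      nlinarith
    have h4 : ‖(f : H)‖ = ‖f‖ := rfl
    rw [hδdef, ← h4]
    nlinarith [h1']
  have hSlow : ∀ f : F, δ * ‖f‖ ≤ ‖Sop f‖ := by
    intro f
    rcases eq_or_ne f 0 with h | h
    · simp [h]
    · have hf : (0:ℝ) < ‖f‖ := norm_pos_iff.2 h
      have h1 : δ * ‖f‖ ^ 2 ≤ (inner ℂ f (Sop f) : ℂ).re := by rw [hSinner]; exact hlow f
      have h2 : (inner ℂ f (Sop f) : ℂ).re ≤ ‖(inner ℂ f (Sop f) : ℂ)‖ := by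
        exact Complex.re_le_norm _
      have h3 : ‖(inner ℂ f (Sop f) : ℂ)‖ ≤ ‖f‖ * ‖Sop f‖ := norm_inner_le_norm _ _
      nlinarith
  have hanti : AntilipschitzWith (Real.toNNReal δ⁻¹) Sop := by
    apply Sop.antilipschitz_of_bound
    intro f
    rw [Real.coe_toNNReal _ (le_of_lt (inv_pos.2 hδ))]
    have h := hSlow f
    rw [← div_eq_inv_mul, le_div_iff₀ hδ]
    linarith
  have hrange : IsClosed (Set.range Sop) := hanti.isClosed_range Sop.uniformContinuous
  have hRcoe : ((LinearMap.range (Sop : F →ₗ[ℂ] F) : Submodule ℂ F) : Set F) = Set.range Sop := by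
    ext g; simp [LinearMap.mem_range]
  haveI : CompleteSpace (LinearMap.range (Sop : F →ₗ[ℂ] F) : Submodule ℂ F) := by
    rw [← hRcoe] at hrange
    exact hrange.completeSpace_coe
  have hRtop : (LinearMap.range (Sop : F →ₗ[ℂ] F) : Submodule ℂ F) = ⊤ := by
    rw [← Submodule.orthogonal_eq_bot_iff]
    rw [Submodule.eq_bot_iff]
    intro g hg
    have h0 : (inner ℂ (Sop g) g : ℂ) = 0 :=
      (Submodule.mem_orthogonal _ g).1 hg (Sop g) (LinearMap.mem_range_self _ g)
    have h1 : (inner ℂ g (Sop g) : ℂ) = 0 := by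
      rw [← inner_conj_symm, h0, map_zero]
    have h2 : δ * ‖g‖ ^ 2 ≤ 0 := by
      have := hlow g
      rw [← hSinner g g, h1] at this
      simpa using this
    have : ‖g‖ = 0 := by
      by_contra hne
      have hpos : 0 < ‖g‖ := (norm_nonneg g).lt_of_ne (Ne.symm hne)
      have := mul_pos hδ (pow_pos hpos 2)
      linarith
    exact norm_eq_zero.1 this
  have hsurj : Function.Surjective Sop := LinearMap.range_eq_top.1 hRtop
  -- reduce u
  set t : ℂ := formA u e / formA e e with ht
  set u₁ : H × ℂ := u - t • e with hu₁def
  have hu₁ : u₁.2 = (inner ℂ x u₁.1 : ℂ) := by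
    rw [← formA_e_zero_iff]
    rw [hu₁def, formA_sub_left, formA_smul_left, ht, div_mul_cancel₀ _ heene, sub_self]
  set y : H := u₁.1 with hy
  obtain ⟨f, hf⟩ := hsurj (F.orthogonalProjectionOnto (Bop x y))
  have hperp : Bop x (y - (f : H)) ∈ Fᗮ := by
    rw [← Submodule.orthogonalProjectionOnto_eq_zero_iff]
    rw [map_sub, map_sub, ← hSapp, hf, sub_self]
  refine ⟨t • e + jmap x (f : H), ?_, ?_⟩
  · exact Submodule.add_mem M (Submodule.smul_mem M t hxM) ((hFmem _).1 f.2)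
  · set r : H × ℂ := u - (t • e + jmap x (f : H)) with hr
    have hrr : r = u₁ - jmap x (f : H) := by rw [hr, hu₁def]; abel
    have hr1 : r.1 = y - (f : H) := by rw [hrr]; rfl
    have hr2 : r.2 = (inner ℂ x r.1 : ℂ) := by
      have : r.2 = u₁.2 - (inner ℂ x (f : H) : ℂ) := by rw [hrr]; rfl
      rw [this, hu₁, hr1, inner_sub_right, hy]
    intro m' hm'
    set s : ℂ := formA m' e / formA e e with hs
    set m₀ : H × ℂ := m' - s • e with hm₀
    have hm₀M : m₀ ∈ M := Submodule.sub_mem M hm' (Submodule.smul_mem M s hxM)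
    have hm₀N : m₀.2 = (inner ℂ x m₀.1 : ℂ) := by
      rw [← formA_e_zero_iff]
      rw [hm₀, formA_sub_left, formA_smul_left, hs, div_mul_cancel₀ _ heene, sub_self]
    have hm₀F : m₀.1 ∈ F := by
      rw [hFmem]
      have : jmap x m₀.1 = m₀ := by
        apply Prod.ext
        · rfl
        · exact hm₀N.symm
      rw [this]; exact hm₀M
    have hexp : m' = s • e + m₀ := by rw [hm₀]; abel
    rw [hexp, formA_add_right, formA_smul_right]
    have h1 : formA r e = 0 := (formA_e_zero_iff x r).2 hr2
    have h2 : formA r m₀ = 0 := by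
      rw [formA_jpair x r m₀ hr2 hm₀N, hr1]
      exact hperp m₀.1 hm₀F
    rw [h1, h2]; ring

end CentAux
namespace CentAux
set_option linter.unusedSectionVars false
variable {H : Type*} [NormedAddCommGroup H] [InnerProductSpace ℂ H] [CompleteSpace H]

lemma mem_daggerA {M : Submodule ℂ (H × ℂ)} {v : H × ℂ} :
    v ∈ daggerA M ↔ ∀ m ∈ M, formA v m = 0 := Iff.rfl

lemma dagger_isClosed (M : Submodule ℂ (H × ℂ)) :
    IsClosed ((daggerA M : Submodule ℂ (H × ℂ)) : Set (H × ℂ)) := by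
  have h : ((daggerA M : Submodule ℂ (H × ℂ)) : Set (H × ℂ))
      = ⋂ m ∈ (M : Set (H × ℂ)), {v : H × ℂ | formA v m = 0} := by
    ext v
    simp only [Set.mem_iInter, Set.mem_setOf_eq, SetLike.mem_coe]
    exact mem_daggerA
  rw [h]
  exact isClosed_biInter fun m _ => isClosed_eq (continuous_formA_left m) continuous_const

lemma formA_M_dagger {M : Submodule ℂ (H × ℂ)} {m w : H × ℂ} (hm : m ∈ M)
    (hw : w ∈ daggerA M) : formA m w = 0 := by
  rw [formA_conj, hw m hm, map_zero]

lemma isCompl_dagger {x : H} (hx : ‖x‖ < 1) {M : Submodule ℂ (H × ℂ)}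
    (hMc : IsClosed (M : Set (H × ℂ))) (hxM : ((x, (1:ℂ)) : H × ℂ) ∈ M) :
    IsCompl M (daggerA M) := by
  constructor
  · rw [disjoint_iff, Submodule.eq_bot_iff]
    intro v hv
    rw [Submodule.mem_inf] at hv
    by_contra hne
    have hpos := pos_def_N hx (dagger_snd hxM hv.2) hne
    have h0 : formA v v = 0 := hv.2 v hv.1
    rw [h0] at hpos
    simp at hpos
  · rw [codisjoint_iff, Submodule.eq_top_iff']
    intro v
    obtain ⟨m, hm, hd⟩ := exists_decomp hx hMc hxM v
    have hv : v = m + (v - m) := by abel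
    rw [hv]
    exact Submodule.add_mem _ (Submodule.mem_sup_left hm) (Submodule.mem_sup_right hd)

lemma nA_le_norm (u : H × ℂ) : nA u ≤ ‖u‖ := by
  rw [nA]
  have h1 : (formA u u).re ≤ ‖u‖ ^ 2 := by
    rw [formA_self, Complex.ofReal_re]
    have := norm_fst_le u
    have := norm_nonneg u.2
    have := norm_nonneg u.1
    nlinarith
  calc Real.sqrt (formA u u).re ≤ Real.sqrt (‖u‖ ^ 2) := Real.sqrt_le_sqrt h1
    _ = ‖u‖ := Real.sqrt_sq (norm_nonneg u)

lemma norm_le_nA {x : H} (hx : ‖x‖ < 1) {w : H × ℂ} (hw : w.2 = (inner ℂ x w.1 : ℂ)) :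
    Real.sqrt (1 - ‖x‖ ^ 2) * ‖w‖ ≤ nA w := by
  have hδ : (0:ℝ) < 1 - ‖x‖ ^ 2 := by nlinarith [norm_nonneg x]
  have hn2 : ‖w.2‖ ≤ ‖w.1‖ := by
    rw [hw]
    calc ‖(inner ℂ x w.1 : ℂ)‖ ≤ ‖x‖ * ‖w.1‖ := norm_inner_le_norm _ _
      _ ≤ 1 * ‖w.1‖ := by nlinarith [norm_nonneg w.1, norm_nonneg x]
      _ = ‖w.1‖ := one_mul _
  have hnw : ‖w‖ ≤ ‖w.1‖ := by
    rw [Prod.norm_def]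
    exact max_le le_rfl hn2
  have h1 : (1 - ‖x‖ ^ 2) * ‖w.1‖ ^ 2 ≤ (formA w w).re := pos_on_N hx w hw
  calc Real.sqrt (1 - ‖x‖ ^ 2) * ‖w‖ ≤ Real.sqrt (1 - ‖x‖ ^ 2) * ‖w.1‖ := by
        have := Real.sqrt_nonneg (1 - ‖x‖ ^ 2)
        nlinarith
    _ = Real.sqrt ((1 - ‖x‖ ^ 2) * ‖w.1‖ ^ 2) := by
        rw [Real.sqrt_mul (le_of_lt hδ), Real.sqrt_sq (norm_nonneg w.1)]
    _ ≤ Real.sqrt (formA w w).re := Real.sqrt_le_sqrt h1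
    _ = nA w := rfl

end CentAux

open CentAux in
/-- centralizer of an elliptic isometry `T` whose eigenspace
`M = ker(T - λI)` is time-like: `H ⊕ ℂ = M ⊕ M†`, and `S ∈ G` commutes with `T`
iff it preserves `M` and `M†` and commutes with `T` on `M†`; the centralizer is
identified with `G_M × Z(T|_{M†})`. -/
theorem centralizer_elliptic (T : (H × ℂ) →L[ℂ] (H × ℂ))
    (hT : memG T) (hell : IsEllipticG T) (lam : ℂ)
    (M : Submodule ℂ (H × ℂ))
    (hM : M = LinearMap.ker ((T : (H × ℂ) →ₗ[ℂ] (H × ℂ)) - lam • LinearMap.id))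
    (htime : ∃ v ∈ M, ∃ c : ℝ, c < 0 ∧ formA v v = (c : ℂ)) :
    -- internal direct sum H ⊕ ℂ = M ⊕ M†
    IsCompl M (daggerA M) ∧
    -- A is positive definite on M† and M† is complete for the induced norm
    (∀ v ∈ daggerA M, v ≠ 0 → 0 < (formA v v).re ∧ (formA v v).im = 0) ∧
    CompleteForA (daggerA M) ∧
    -- T maps M† bijectively onto itself
    Set.BijOn T (daggerA M : Set (H × ℂ)) (daggerA M : Set (H × ℂ)) ∧
    -- S ∈ G commutes with T iff it preserves M and M† and commutes with T on M†
    (∀ S : (H × ℂ) →L[ℂ] (H × ℂ), memG S →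
      (S ∘L T = T ∘L S ↔
        (S '' (M : Set (H × ℂ)) = (M : Set (H × ℂ)) ∧
         S '' (daggerA M : Set (H × ℂ)) = (daggerA M : Set (H × ℂ)) ∧
         ∀ v ∈ daggerA M, S (T v) = T (S v)))) ∧
    -- the centralizer of T is G_M × Z(T|_{M†}): every pair consisting of an
    -- A-preserving bijection of M and a unitary of (M†, A) commuting with T|_{M†}
    -- comes from a unique element of the centralizer of T in G
    (∀ (S₁ : M →L[ℂ] M) (S₂ : daggerA M →L[ℂ] daggerA M),
      Function.Bijective S₁ →
      (∀ u v : M, formA (S₁ u : H × ℂ) (S₁ v : H × ℂ) = formA (u : H × ℂ) (v : H × ℂ)) →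
      Function.Bijective S₂ →
      (∀ u v : daggerA M,
        formA (S₂ u : H × ℂ) (S₂ v : H × ℂ) = formA (u : H × ℂ) (v : H × ℂ)) →
      (∀ u w : daggerA M, T (u : H × ℂ) = (w : H × ℂ) →
        T (S₂ u : H × ℂ) = (S₂ w : H × ℂ)) →
      ∃! S : (H × ℂ) →L[ℂ] (H × ℂ), memG S ∧ S ∘L T = T ∘L S ∧
        (∀ u : M, S (u : H × ℂ) = (S₁ u : H × ℂ)) ∧
        (∀ u : daggerA M, S (u : H × ℂ) = (S₂ u : H × ℂ))) := by
  classical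
  obtain ⟨v₀, hv₀M, c, hc, hQ⟩ := htime
  have hQr : ‖v₀.1‖ ^ 2 - ‖v₀.2‖ ^ 2 = c := by
    have h := formA_self v₀
    rw [hQ] at h
    exact_mod_cast h.symm
  have hv2 : v₀.2 ≠ 0 := by
    intro h
    rw [h] at hQr
    simp at hQr
    nlinarith [sq_nonneg ‖v₀.1‖]
  set x : H := (v₀.2)⁻¹ • v₀.1 with hxdef
  have hxM : ((x, (1:ℂ)) : H × ℂ) ∈ M := by
    have h := M.smul_mem (v₀.2)⁻¹ hv₀M
    have he : ((v₀.2)⁻¹ • v₀ : H × ℂ) = ((x, 1) : H × ℂ) := by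
      apply Prod.ext
      · rfl
      · show (v₀.2)⁻¹ * v₀.2 = 1
        exact inv_mul_cancel₀ hv2
    rwa [he] at h
  have hx : ‖x‖ < 1 := by
    have h2 : (0:ℝ) < ‖v₀.2‖ := norm_pos_iff.2 hv2
    have h1 : ‖v₀.1‖ < ‖v₀.2‖ := by nlinarith [norm_nonneg v₀.1]
    rw [hxdef]
    calc ‖(v₀.2)⁻¹ • v₀.1‖ = ‖v₀.2‖⁻¹ * ‖v₀.1‖ := by rw [norm_smul, norm_inv]
      _ < ‖v₀.2‖⁻¹ * ‖v₀.2‖ := by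
          exact mul_lt_mul_of_pos_left h1 (inv_pos.2 h2)
      _ = 1 := inv_mul_cancel₀ (ne_of_gt h2)
  have hMc : IsClosed (M : Set (H × ℂ)) := by
    have hker : M = LinearMap.ker ((T - lam • ContinuousLinearMap.id ℂ (H × ℂ) : (H × ℂ) →L[ℂ] (H × ℂ)) : (H × ℂ) →ₗ[ℂ] (H × ℂ)) := by
      rw [hM]
      ext v
      simp [LinearMap.mem_ker, ContinuousLinearMap.sub_apply, ContinuousLinearMap.smul_apply]
    rw [hker]
    exact ContinuousLinearMap.isClosed_ker _
  have hmem : ∀ v : H × ℂ, v ∈ M ↔ T v = lam • v := by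
    intro v
    rw [hM, LinearMap.mem_ker]
    simp only [LinearMap.sub_apply, LinearMap.smul_apply, LinearMap.id_apply,
      ContinuousLinearMap.coe_coe, sub_eq_zero]
  have hcompl : IsCompl M (daggerA M) := isCompl_dagger hx hMc hxM
  have hdc : IsClosed ((daggerA M : Submodule ℂ (H × ℂ)) : Set (H × ℂ)) := dagger_isClosed M
  have hposdef : ∀ v ∈ daggerA M, v ≠ 0 → 0 < (formA v v).re ∧ (formA v v).im = 0 := by
    intro v hv hvne
    refine ⟨pos_def_N hx (dagger_snd hxM hv) hvne, ?_⟩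
    rw [formA_self]
    exact Complex.ofReal_im _
  have hcomp : CompleteForA (daggerA M) := by
    intro f hf hcau
    have hδ : (0:ℝ) < Real.sqrt (1 - ‖x‖ ^ 2) :=
      Real.sqrt_pos.2 (by nlinarith [norm_nonneg x])
    have hcau' : CauchySeq f := by
      rw [Metric.cauchySeq_iff]
      intro ε hε
      obtain ⟨N, hN⟩ := hcau (Real.sqrt (1 - ‖x‖ ^ 2) * ε) (by positivity)
      refine ⟨N, fun m hm n hn => ?_⟩
      have h1 := hN m n hm hn
      have h2 : (f m - f n).2 = (inner ℂ x (f m - f n).1 : ℂ) :=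
        dagger_snd hxM (Submodule.sub_mem _ (hf m) (hf n))
      have h3 := norm_le_nA hx h2
      rw [dist_eq_norm]
      exact (mul_lt_mul_iff_right₀ hδ).1 (lt_of_le_of_lt h3 h1)
    obtain ⟨v, hv⟩ := cauchySeq_tendsto_of_complete hcau'
    refine ⟨v, ?_, ?_⟩
    · exact hdc.mem_of_tendsto hv (Filter.Eventually.of_forall fun n => hf n)
    · intro ε hε
      obtain ⟨N, hN⟩ := (Metric.tendsto_atTop.1 hv) ε hε
      refine ⟨N, fun n hn => ?_⟩
      have h := hN n hn
      rw [dist_eq_norm] at h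
      exact lt_of_le_of_lt (nA_le_norm _) h
  have hlam : lam ≠ 0 := by
    intro h
    have hTe : T ((x, 1) : H × ℂ) = lam • ((x, 1) : H × ℂ) := (hmem _).1 hxM
    rw [h, zero_smul] at hTe
    have h0 : ((x, 1) : H × ℂ) = 0 := hT.1.1 (by rw [hTe, map_zero])
    simpa using congrArg Prod.snd h0
  have hTmapsTo : Set.MapsTo T (daggerA M : Set (H × ℂ)) (daggerA M : Set (H × ℂ)) := by
    intro w hw
    intro m hm
    have hmm : formA (T w) m = (starRingEnd ℂ) lam⁻¹ * formA (T w) (T m) := by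
      conv_lhs => rw [show m = lam⁻¹ • T m by
        rw [(hmem m).1 hm, smul_smul, inv_mul_cancel₀ hlam, one_smul]]
      rw [formA_smul_right]
    rw [hmm, hT.2, hw m hm, mul_zero]
  have hTker : T.ker = ⊥ := LinearMap.ker_eq_bot.2 hT.1.1
  have hTrange : T.range = ⊤ := LinearMap.range_eq_top.2 hT.1.2
  set Te := ContinuousLinearEquiv.ofBijective T hTker hTrange with hTedef
  have hTeapp : ∀ v, Te v = T v := fun v => rfl
  have hTbij : Set.BijOn T (daggerA M : Set (H × ℂ)) (daggerA M : Set (H × ℂ)) := by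
    refine ⟨hTmapsTo, hT.1.1.injOn, ?_⟩
    intro w hw
    have h2 : T (Te.symm w) = w := by
      rw [← hTeapp (Te.symm w)]
      exact Te.apply_symm_apply w
    refine ⟨Te.symm w, ?_, h2⟩
    intro m hm
    have h1 : formA (Te.symm w : H × ℂ) m = formA (T (Te.symm w)) (T m) := (hT.2 _ _).symm
    rw [h1, h2, (hmem m).1 hm, formA_smul_right, hw m hm, mul_zero]
  have hpart5 : ∀ S : (H × ℂ) →L[ℂ] (H × ℂ), memG S →
      (S ∘L T = T ∘L S ↔
        (S '' (M : Set (H × ℂ)) = (M : Set (H × ℂ)) ∧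
         S '' (daggerA M : Set (H × ℂ)) = (daggerA M : Set (H × ℂ)) ∧
         ∀ v ∈ daggerA M, S (T v) = T (S v))) := by
    intro S hS
    constructor
    · intro hST
      have hSTp : ∀ v, S (T v) = T (S v) := fun v => ContinuousLinearMap.ext_iff.1 hST v
      set Se := ContinuousLinearEquiv.ofBijective S (LinearMap.ker_eq_bot.2 hS.1.1)
        (LinearMap.range_eq_top.2 hS.1.2) with hSedef
      have hSeapp : ∀ v, Se v = S v := fun v => rfl
      have hSM : S '' (M : Set (H × ℂ)) = (M : Set (H × ℂ)) := by
        apply Set.Subset.antisymm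
        · rintro _ ⟨m, hm, rfl⟩
          rw [SetLike.mem_coe, hmem]
          rw [← hSTp m, (hmem m).1 hm, map_smul]
        · intro m hm
          have hsm : S (Se.symm m) = m := by
            rw [← hSeapp]; exact Se.apply_symm_apply m
          refine ⟨Se.symm m, ?_, hsm⟩
          rw [SetLike.mem_coe, hmem]
          have l1 : S (T (Se.symm m)) = lam • m := by
            rw [hSTp, hsm]; exact (hmem m).1 hm
          have l2 : S (lam • Se.symm m) = lam • m := by rw [map_smul, hsm]
          exact hS.1.1 (l1.trans l2.symm)
      have hSD : S '' (daggerA M : Set (H × ℂ)) = (daggerA M : Set (H × ℂ)) := by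
        apply Set.Subset.antisymm
        · rintro _ ⟨w, hw, rfl⟩
          rw [SetLike.mem_coe, mem_daggerA]
          intro m hm
          have hm2 : m ∈ S '' (M : Set (H × ℂ)) := by rw [hSM]; exact hm
          obtain ⟨m', hm', rfl⟩ := hm2
          rw [hS.2, hw m' hm']
        · intro w hw
          have hsw : S (Se.symm w) = w := by
            rw [← hSeapp]; exact Se.apply_symm_apply w
          refine ⟨Se.symm w, ?_, hsw⟩
          rw [SetLike.mem_coe, mem_daggerA]
          intro m hm
          have h1 : formA (Se.symm w : H × ℂ) m = formA (S (Se.symm w)) (S m) := (hS.2 _ _).symm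
          have h2 : S m ∈ (M : Set (H × ℂ)) := by
            rw [← hSM]; exact Set.mem_image_of_mem S hm
          rw [h1, hsw]
          exact hw (S m) h2
      exact ⟨hSM, hSD, fun v _ => hSTp v⟩
    · rintro ⟨h1, h2, h3⟩
      apply ContinuousLinearMap.ext
      intro v
      have hvtop : v ∈ M ⊔ daggerA M := by
        rw [codisjoint_iff.1 hcompl.codisjoint]; exact Submodule.mem_top
      obtain ⟨m, hm, w, hw, rfl⟩ := Submodule.mem_sup.1 hvtop
      have hSm : S m ∈ M := by
        have := Set.mem_image_of_mem S (show m ∈ (M : Set (H × ℂ)) from hm)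
        rw [h1] at this
        exact this
      have e1 : S (T m) = T (S m) := by
        rw [(hmem m).1 hm, map_smul]
        exact ((hmem (S m)).1 hSm).symm
      have e2 : S (T w) = T (S w) := h3 w hw
      simp only [ContinuousLinearMap.comp_apply, map_add, e1, e2]
  refine ⟨hcompl, hposdef, hcomp, hTbij, hpart5, ?_⟩
  intro S₁ S₂ hS₁bij hS₁form hS₂bij hS₂form hS₂comm
  set P₁ : (H × ℂ) →L[ℂ] M := M.linearProjOfClosedCompl (daggerA M) hcompl hMc hdc with hP₁
  set P₂ : (H × ℂ) →L[ℂ] (daggerA M) :=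
    (daggerA M).linearProjOfClosedCompl M hcompl.symm hdc hMc with hP₂
  have hP₁l : ∀ u : M, P₁ (u : H × ℂ) = u := fun u => by
    rw [hP₁]
    exact Submodule.projectionOnto_apply_left hcompl u
  have hP₁r : ∀ u : daggerA M, P₁ (u : H × ℂ) = 0 := fun u => by
    rw [hP₁]
    exact Submodule.projectionOnto_apply_right hcompl u
  have hP₂l : ∀ u : daggerA M, P₂ (u : H × ℂ) = u := fun u => by
    rw [hP₂]
    exact Submodule.projectionOnto_apply_left hcompl.symm u
  have hP₂r : ∀ u : M, P₂ (u : H × ℂ) = 0 := fun u => by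
    rw [hP₂]
    exact Submodule.projectionOnto_apply_right hcompl.symm u
  have hPsum : ∀ v : H × ℂ, ((P₁ v : H × ℂ) : H × ℂ) + ((P₂ v : H × ℂ)) = v := fun v => by
    rw [hP₁, hP₂]
    simp only [Submodule.coe_continuous_linearProjOfClosedCompl']
    exact Submodule.projection_add_projection_eq_self hcompl v
  set S : (H × ℂ) →L[ℂ] (H × ℂ) :=
    M.subtypeL ∘L (S₁ ∘L P₁) + (daggerA M).subtypeL ∘L (S₂ ∘L P₂) with hSdef
  have hSapp : ∀ v, S v = ((S₁ (P₁ v) : H × ℂ)) + ((S₂ (P₂ v) : H × ℂ)) := fun v => rfl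
  have hSMap : ∀ u : M, S (u : H × ℂ) = (S₁ u : H × ℂ) := by
    intro u
    rw [hSapp, hP₁l u, hP₂r u, map_zero]
    simp
  have hSDap : ∀ u : daggerA M, S (u : H × ℂ) = (S₂ u : H × ℂ) := by
    intro u
    rw [hSapp, hP₁r u, hP₂l u, map_zero]
    simp
  have hdecomp : ∀ v : H × ℂ, ∃ (m : M) (w : daggerA M), v = (m : H × ℂ) + w :=
    fun v => ⟨P₁ v, P₂ v, (hPsum v).symm⟩
  have hzero : ∀ (m : M) (w : daggerA M), (m : H × ℂ) + w = 0 → m = 0 ∧ w = 0 := by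
    intro m w h
    have hmw : (m : H × ℂ) = -(w : H × ℂ) := eq_neg_of_add_eq_zero_left h
    have hmem2 : (m : H × ℂ) ∈ M ⊓ daggerA M :=
      Submodule.mem_inf.2 ⟨m.2, by rw [hmw]; exact Submodule.neg_mem _ w.2⟩
    rw [disjoint_iff.1 hcompl.disjoint] at hmem2
    have h0 : (m : H × ℂ) = 0 := (Submodule.mem_bot ℂ).1 hmem2
    refine ⟨Subtype.ext h0, Subtype.ext ?_⟩
    rw [h0, zero_add] at h
    exact h
  have hSinj : Function.Injective S := by
    have hSinj0 : ∀ v, S v = 0 → v = 0 := by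
      intro v hv
      obtain ⟨m, w, rfl⟩ := hdecomp v
      rw [map_add, hSMap m, hSDap w] at hv
      obtain ⟨h1, h2⟩ := hzero (S₁ m) (S₂ w) hv
      have hm0 : m = 0 := hS₁bij.1 (by rw [h1, map_zero])
      have hw0 : w = 0 := hS₂bij.1 (by rw [h2, map_zero])
      rw [hm0, hw0]
      simp
    intro a b hab
    have h : S (a - b) = 0 := by rw [map_sub, hab, sub_self]
    exact sub_eq_zero.1 (hSinj0 _ h)
  have hSsurj : Function.Surjective S := by
    intro v
    obtain ⟨m, w, rfl⟩ := hdecomp v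
    obtain ⟨m', hm'⟩ := hS₁bij.2 m
    obtain ⟨w', hw'⟩ := hS₂bij.2 w
    exact ⟨(m' : H × ℂ) + w', by rw [map_add, hSMap m', hSDap w', hm', hw']⟩
  have formA_add_add : ∀ a b c d : H × ℂ,
      formA (a + b) (c + d) = formA a c + formA a d + formA b c + formA b d := by
    intro a b c d
    rw [formA_add_left, formA_add_right, formA_add_right]
    ring
  have hSform : ∀ u v : H × ℂ, formA (S u) (S v) = formA u v := by
    intro u v
    obtain ⟨m, w, rfl⟩ := hdecomp u
    obtain ⟨m', w', rfl⟩ := hdecomp v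
    rw [map_add, map_add, hSMap m, hSDap w, hSMap m', hSDap w']
    rw [formA_add_add, formA_add_add]
    rw [hS₁form m m', hS₂form w w']
    rw [formA_M_dagger (S₁ m).2 (S₂ w').2, formA_M_dagger m.2 w'.2]
    rw [(S₂ w).2 _ (S₁ m').2, w.2 _ m'.2]
  have hSTM : S '' (M : Set (H × ℂ)) = (M : Set (H × ℂ)) := by
    apply Set.Subset.antisymm
    · rintro _ ⟨m, hm, rfl⟩
      rw [show S m = ((S₁ ⟨m, hm⟩ : M) : H × ℂ) from hSMap ⟨m, hm⟩]
      exact (S₁ ⟨m, hm⟩).2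
    · intro m hm
      obtain ⟨u, hu⟩ := hS₁bij.2 ⟨m, hm⟩
      exact ⟨u, u.2, by rw [hSMap u, hu]⟩
  have hSTD : S '' (daggerA M : Set (H × ℂ)) = (daggerA M : Set (H × ℂ)) := by
    apply Set.Subset.antisymm
    · rintro _ ⟨w, hw, rfl⟩
      rw [show S w = ((S₂ ⟨w, hw⟩ : daggerA M) : H × ℂ) from hSDap ⟨w, hw⟩]
      exact (S₂ ⟨w, hw⟩).2
    · intro w hw
      obtain ⟨u, hu⟩ := hS₂bij.2 ⟨w, hw⟩
      exact ⟨u, u.2, by rw [hSDap u, hu]⟩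
  have hSTcomm : ∀ v ∈ daggerA M, S (T v) = T (S v) := by
    intro w hw
    have hTw : T w ∈ daggerA M := hTmapsTo hw
    have e1 : S (T w) = (S₂ ⟨T w, hTw⟩ : H × ℂ) := hSDap ⟨T w, hTw⟩
    have e2 : S w = (S₂ ⟨w, hw⟩ : H × ℂ) := hSDap ⟨w, hw⟩
    have e3 : T ((S₂ ⟨w, hw⟩ : H × ℂ)) = (S₂ ⟨T w, hTw⟩ : H × ℂ) :=
      hS₂comm ⟨w, hw⟩ ⟨T w, hTw⟩ rfl
    rw [e1, e2, ← e3]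
  have hSmemG : memG S := ⟨⟨hSinj, hSsurj⟩, hSform⟩
  have hScomm : S ∘L T = T ∘L S := (hpart5 S hSmemG).2 ⟨hSTM, hSTD, hSTcomm⟩
  refine ⟨S, ⟨hSmemG, hScomm, hSMap, hSDap⟩, ?_⟩
  rintro S' ⟨hS'G, hS'comm, hS'M, hS'D⟩
  apply ContinuousLinearMap.ext
  intro v
  obtain ⟨m, w, rfl⟩ := hdecomp v
  rw [map_add, map_add, hS'M m, hS'D w, hSMap m, hSDap w]

end
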